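/- Let b be the Hermitian inner product on ℂ² and define, for ψ ∈ ℂ², the vector V_ψ ∈ ℝ^{1,1} by g(V_ψ, X) = -⟨Φ(X)·ψ, ψ⟩_ℝ for all X ∈ ℝ^{1,1}, where Φ(e₁) = i·U, Φ(e₂) = V are the Clifford matrices for signature (1,1) and ⟨·,·⟩_ℝ denotes the real part of an appropriate Spin(1,1)-invariant sesquilinear form ⟨φ,ψ⟩ = (Φ(e₁)φ, ψ) with (·,·) the standard Hermitian product. Then g(V_ψ, V_ψ) ≤ 0 for every ψ ∈ ℂ², and V_ψ = 0 if and only if ψ = 0. -/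
import Mathlib


open Matrix Complex

theorem dirac_current_is_causal_dim_two
    (U V Φ₁ Φ₂ : Matrix (Fin 2) (Fin 2) ℂ)
    (hU : U = !![I, 0; 0, -I])
    (hV : V = !![0, I; I, 0])
    (hΦ₁ : Φ₁ = I • U)
    (hΦ₂ : Φ₂ = V)
    -- Clifford action of a vector `X ∈ ℝ^{1,1}` (coordinates in the basis `e₁, e₂`)
    (Φ : (Fin 2 → ℝ) → Matrix (Fin 2) (Fin 2) ℂ)
    (hΦ : ∀ X : Fin 2 → ℝ, Φ X = (X 0 : ℂ) • Φ₁ + (X 1 : ℂ) • Φ₂)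
    -- the Spin(1,1)-invariant sesquilinear form `⟨φ,ψ⟩ = (Φ(e₁)·φ, ψ)`
    (h : (Fin 2 → ℂ) → (Fin 2 → ℂ) → ℂ)
    (hh : ∀ φ ψ : Fin 2 → ℂ, h φ ψ = star (Φ₁.mulVec φ) ⬝ᵥ ψ)
    -- the Lorentzian metric of signature (-,+) on `ℝ^{1,1}`
    (g : (Fin 2 → ℝ) → (Fin 2 → ℝ) → ℝ)
    (hg : ∀ a b : Fin 2 → ℝ, g a b = -(a 0 * b 0) + a 1 * b 1)
    (ψ : Fin 2 → ℂ) (Vψ : Fin 2 → ℝ)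
    -- the Dirac current: `g(V_ψ, X) = -⟨Φ(X)·ψ, ψ⟩_ℝ` for all `X`
    (hV' : ∀ X : Fin 2 → ℝ, g Vψ X = -(h ((Φ X).mulVec ψ) ψ).re) :
    g Vψ Vψ ≤ 0 ∧ (Vψ = 0 ↔ ψ = 0) := by

  have h0 := hV' ![1, 0]
  have h1 := hV' ![0, 1]
  subst hΦ₁ hΦ₂ hU hV
  simp [hg, hh, hΦ, mulVec, dotProduct, Fin.sum_univ_two, Complex.ext_iff,
    Complex.add_re, Complex.mul_re, Complex.mul_im] at h0 h1
  set ar := (ψ 0).re; set ai := (ψ 0).im; set br := (ψ 1).re; set bi := (ψ 1).im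
  constructor
  · rw [hg]
    nlinarith [mul_nonneg (add_nonneg (sq_nonneg (ai-br)) (sq_nonneg (ar+bi)))
      (add_nonneg (sq_nonneg (ai+br)) (sq_nonneg (ar-bi)))]
  · constructor
    · intro hz
      have h00 : Vψ 0 = 0 := by rw [hz]; rfl
      rw [h00] at h0
      have har : ar = 0 := by nlinarith [sq_nonneg ar, sq_nonneg ai, sq_nonneg br, sq_nonneg bi]
      have hai : ai = 0 := by nlinarith [sq_nonneg ar, sq_nonneg ai, sq_nonneg br, sq_nonneg bi]
      have hbr : br = 0 := by nlinarith [sq_nonneg ar, sq_nonneg ai, sq_nonneg br, sq_nonneg bi]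
      have hbi : bi = 0 := by nlinarith [sq_nonneg ar, sq_nonneg ai, sq_nonneg br, sq_nonneg bi]
      funext i
      fin_cases i <;> simp <;> exact Complex.ext (by assumption) (by assumption)
    · intro hz
      subst hz
      have ha : ar = 0 := by simp [ar]
      have hb : ai = 0 := by simp [ai]
      have hc : br = 0 := by simp [br]
      have hd : bi = 0 := by simp [bi]
      rw [ha, hb, hc, hd] at h0 h1
      funext i
      fin_cases i
      · show Vψ 0 = 0; linarith
      · show Vψ 1 = 0; linarith
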